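/- arXiv:1910.00924 — 9 statements merged into one kernel-verified Lean document; each statement's English description precedes it below -/
import Mathlib

section
/- The set {0,1,2} is extreme in ZMod 4: the function f with f(0)=1, f(1)=e^{3πi/4}, f(2)=i, f(3)=0 satisfies |f(x)|=1 on {0,1,2} and ∑_x f(x)·conj(f(x−d)) = 0 for every nonzero d ∈ ZMod 4. Equivalently, its Fourier transform has |f̂(k)| = √3 for all k. -/
open Complex Finset

theorem extreme_012_zmod4 :
    ∀ f : ZMod 4 → ℂ,
      f 0 = 1 → f 1 = Complex.exp ((3 * Real.pi / 4 : ℝ) * Complex.I) →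
      f 2 = Complex.I → f 3 = 0 →
      (∀ x ∈ ({0, 1, 2} : Finset (ZMod 4)), ‖f x‖ = 1) ∧
      ∀ d : ZMod 4, d ≠ 0 →
        ∑ x : ZMod 4, f x * (starRingEnd ℂ) (f (x - d)) = 0 := by
  intro f h0 h1 h2 h3
  have hs : Real.sqrt 2 ^ 2 = 2 := Real.sq_sqrt (by norm_num)
  have h1' : f 1 = (-(Real.sqrt 2)/2 : ℝ) + (Real.sqrt 2/2 : ℝ) * Complex.I := by
    rw [h1, Complex.exp_mul_I]
    have hc : Real.cos (3 * Real.pi / 4) = -(Real.sqrt 2 / 2) := by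
      have : (3 : ℝ) * Real.pi / 4 = Real.pi - Real.pi / 4 := by ring
      rw [this, Real.cos_pi_sub, Real.cos_pi_div_four]
    have hsin : Real.sin (3 * Real.pi / 4) = Real.sqrt 2 / 2 := by
      have : (3 : ℝ) * Real.pi / 4 = Real.pi - Real.pi / 4 := by ring
      rw [this, Real.sin_pi_sub, Real.sin_pi_div_four]
    rw [← Complex.ofReal_cos, ← Complex.ofReal_sin, hc, hsin]
    push_cast
    ring
  constructor
  · intro x hx
    fin_cases hx
    · simp [h0]
    · rw [h1]; exact Complex.norm_exp_ofReal_mul_I _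
    · simp [h2]
  · intro d hd
    have hsum : ∀ g : ZMod 4 → ℂ, ∑ x : ZMod 4, g x = g 0 + g 1 + g 2 + g 3 := by
      intro g
      show ∑ x : Fin 4, g x = _
      exact Fin.sum_univ_four g
    rw [hsum]
    rcases (by decide : ∀ x : ZMod 4, x = 0 ∨ x = 1 ∨ x = 2 ∨ x = 3) d with h|h|h|h <;> subst h
    · exact absurd rfl hd
    · have e1 : (0 : ZMod 4) - 1 = 3 := by decide
      have e2 : (1 : ZMod 4) - 1 = 0 := by decide
      have e3 : (2 : ZMod 4) - 1 = 1 := by decide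
      have e4 : (3 : ZMod 4) - 1 = 2 := by decide
      rw [e1, e2, e3, e4, h0, h1', h2, h3]
      simp [map_add, map_mul, map_div₀, map_ofNat, Complex.conj_ofReal, Complex.conj_I, Complex.I_sq]
      try ring
      try (rw [Complex.I_sq]; ring)
    · have e1 : (0 : ZMod 4) - 2 = 2 := by decide
      have e2 : (1 : ZMod 4) - 2 = 3 := by decide
      have e3 : (2 : ZMod 4) - 2 = 0 := by decide
      have e4 : (3 : ZMod 4) - 2 = 1 := by decide
      rw [e1, e2, e3, e4, h0, h1', h2, h3]
      simp [map_add, map_mul, map_div₀, map_ofNat, Complex.conj_ofReal, Complex.conj_I, Complex.I_sq]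
      try ring
      try (rw [Complex.I_sq]; ring)
    · have e1 : (0 : ZMod 4) - 3 = 1 := by decide
      have e2 : (1 : ZMod 4) - 3 = 2 := by decide
      have e3 : (2 : ZMod 4) - 3 = 3 := by decide
      have e4 : (3 : ZMod 4) - 3 = 0 := by decide
      rw [e1, e2, e3, e4, h0, h1', h2, h3]
      simp [map_add, map_mul, map_div₀, map_ofNat, Complex.conj_ofReal, Complex.conj_I, Complex.I_sq]
      try ring
      try (rw [Complex.I_sq]; ring)
end

section
/- Every extreme measure on {0,1,2} ⊂ ZMod 4 with coefficient 1 at 0 has the form δ_0 + a·δ_1 + i·ε·δ_2 where ε = ±1 and a ∈ {±e^{3πi/4}} (when ε = 1) or a ∈ {±e^{πi/4}} (when ε = −1). In particular, if f(0)=1, |f(1)|=|f(2)|=1, and f has zero autocorrelation at all nonzero shifts in ZMod 4, then f(2) = ±i. -/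
open Complex Finset

theorem extreme_measures_012_zmod4_classified
    (f : ZMod 4 → ℂ)
    (h0 : f 0 = 1) (h1 : ‖f 1‖ = 1) (h2 : ‖f 2‖ = 1)
    (h3 : f 3 = 0)
    (hext : ∀ d : ZMod 4, d ≠ 0 →
      ∑ x : ZMod 4, f x * (starRingEnd ℂ) (f (x - d)) = 0) :
    (f 2 = Complex.I ∧
        (f 1 = Complex.exp ((3 * Real.pi / 4 : ℝ) * Complex.I) ∨
         f 1 = -Complex.exp ((3 * Real.pi / 4 : ℝ) * Complex.I))) ∨
    (f 2 = -Complex.I ∧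
        (f 1 = Complex.exp ((Real.pi / 4 : ℝ) * Complex.I) ∨
         f 1 = -Complex.exp ((Real.pi / 4 : ℝ) * Complex.I))) := by
  have expand : ∀ d : ZMod 4, d ≠ 0 →
      f 0 * (starRingEnd ℂ) (f (0 - d)) + f 1 * (starRingEnd ℂ) (f (1 - d))
        + f 2 * (starRingEnd ℂ) (f (2 - d)) + f 3 * (starRingEnd ℂ) (f (3 - d)) = 0 := by
    intro d hd
    have := hext d hd
    rw [show (univ : Finset (ZMod 4)) = {0,1,2,3} by decide, Finset.sum_insert (by decide),
      Finset.sum_insert (by decide), Finset.sum_insert (by decide), Finset.sum_singleton] at this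
    linear_combination this
  set a := f 1 with ha
  set b := f 2 with hb
  have e1 : a + b * (starRingEnd ℂ) a = 0 := by
    have := expand 1 (by decide)
    rw [show ((0 : ZMod 4) - 1) = 3 from by decide, show ((1 : ZMod 4) - 1) = 0 from by decide,
      show ((2 : ZMod 4) - 1) = 1 from by decide, show ((3 : ZMod 4) - 1) = 2 from by decide,
      h0, h3] at this
    simpa using this
  have e2 : b + (starRingEnd ℂ) b = 0 := by
    have := expand 2 (by decide)
    rw [show ((0 : ZMod 4) - 2) = 2 from by decide, show ((1 : ZMod 4) - 2) = 3 from by decide,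
      show ((2 : ZMod 4) - 2) = 0 from by decide, show ((3 : ZMod 4) - 2) = 1 from by decide,
      h0, h3] at this
    rw [← hb] at this; simp only [map_zero, map_one, mul_zero, mul_one, zero_mul, one_mul, add_zero, zero_add] at this; linear_combination this
  have hna : a * (starRingEnd ℂ) a = 1 := by
    rw [Complex.mul_conj]
    norm_cast
    rw [← Complex.sq_norm, h1]; norm_num
  have hsq : a ^ 2 = -b := by
    have h' : a * a + b * (a * (starRingEnd ℂ) a) = 0 := by
      have : a * (a + b * (starRingEnd ℂ) a) = 0 := by rw [e1]; ring
      linear_combination this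
    rw [hna] at h'
    linear_combination h'
  -- b = I or b = -I
  have hre : b.re = 0 := by
    have := congrArg Complex.re e2
    simp only [Complex.add_re, Complex.conj_re, Complex.zero_re] at this
    linarith
  have him : b.im = 1 ∨ b.im = -1 := by
    have h := Complex.sq_norm b
    rw [h2, Complex.normSq_apply, hre] at h
    exact sq_eq_one_iff.mp (by nlinarith)
  have hbI : b = Complex.I ∨ b = -Complex.I := by
    rcases him with h | h
    · left; exact Complex.ext (by simp [hre]) (by simp [h])
    · right; exact Complex.ext (by simp [hre]) (by simp [h])
  rcases hbI with hB | hB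
  · left
    refine ⟨hB, ?_⟩
    have hc : Complex.exp ((3 * Real.pi / 4 : ℝ) * Complex.I) ^ 2 = -Complex.I := by
      rw [sq, ← Complex.exp_add,
        show ((3 * Real.pi / 4 : ℝ) : ℂ) * I + ((3 * Real.pi / 4 : ℝ) : ℂ) * I
          = ((3 * Real.pi / 2 : ℝ) : ℂ) * I by push_cast; ring, Complex.exp_mul_I]
      rw [show ((3 * Real.pi / 2 : ℝ) : ℂ) = ((Real.pi + Real.pi / 2 : ℝ) : ℂ) by push_cast; ring]
      rw [← Complex.ofReal_cos, ← Complex.ofReal_sin, Real.cos_add, Real.sin_add,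
        Real.cos_pi, Real.sin_pi, Real.cos_pi_div_two, Real.sin_pi_div_two]
      push_cast; ring
    exact sq_eq_sq_iff_eq_or_eq_neg.mp (by rw [hsq, hB, hc])
  · right
    refine ⟨hB, ?_⟩
    have hc : Complex.exp ((Real.pi / 4 : ℝ) * Complex.I) ^ 2 = Complex.I := by
      rw [sq, ← Complex.exp_add,
        show ((Real.pi / 4 : ℝ) : ℂ) * I + ((Real.pi / 4 : ℝ) : ℂ) * I
          = ((Real.pi / 2 : ℝ) : ℂ) * I by push_cast; ring, Complex.exp_mul_I]
      rw [← Complex.ofReal_cos, ← Complex.ofReal_sin, Real.cos_pi_div_two, Real.sin_pi_div_two]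
      push_cast; ring
    exact sq_eq_sq_iff_eq_or_eq_neg.mp (by rw [hsq, hB, hc]; ring)
end

section
/- Let k ≥ 3 and let E = {0, a, b} be a three-element extreme subset of ZMod k. Then either E is a subgroup of ZMod k, or E is a three-element subset of a four-element subgroup of ZMod k. -/
open Complex Finset

/-- A finite subset `E` of `ZMod k` is extreme if there is a function supported
on `E`, unimodular on `E`, with vanishing autocorrelation at nonzero shifts. -/
def IsExtremeSet {k : ℕ} [NeZero k] (E : Finset (ZMod k)) : Prop :=
  ∃ f : ZMod k → ℂ,
    (∀ x ∈ E, ‖f x‖ = 1) ∧ (∀ x ∉ E, f x = 0) ∧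
    ∀ d : ZMod k, d ≠ 0 → ∑ x : ZMod k, f x * (starRingEnd ℂ) (f (x - d)) = 0

/-- In `ZMod k` there is at most one element of order two. -/
lemma two_torsion_unique {k : ℕ} [NeZero k] (x y : ZMod k)
    (hx : x + x = 0) (hy : y + y = 0) (hx0 : x ≠ 0) (hy0 : y ≠ 0) : x = y := by
  have hk : 0 < k := Nat.pos_of_ne_zero (NeZero.ne k)
  have hxv : (x + x).val = 0 := by rw [hx, ZMod.val_zero]
  have hyv : (y + y).val = 0 := by rw [hy, ZMod.val_zero]
  rw [ZMod.val_add] at hxv hyv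
  have hxlt : x.val < k := ZMod.val_lt x
  have hylt : y.val < k := ZMod.val_lt y
  have hx0' : x.val ≠ 0 := fun h => hx0 ((ZMod.val_eq_zero x).mp h)
  have hy0' : y.val ≠ 0 := fun h => hy0 ((ZMod.val_eq_zero y).mp h)
  have h1 : x.val + x.val = k := by
    obtain ⟨m, hm⟩ := Nat.dvd_of_mod_eq_zero hxv
    rcases Nat.lt_or_ge m 2 with h | h
    · interval_cases m <;> omega
    · have : k * 2 ≤ k * m := Nat.mul_le_mul_left k h
      omega
  have h2 : y.val + y.val = k := by
    obtain ⟨m, hm⟩ := Nat.dvd_of_mod_eq_zero hyv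
    rcases Nat.lt_or_ge m 2 with h | h
    · interval_cases m <;> omega
    · have : k * 2 ≤ k * m := Nat.mul_le_mul_left k h
      omega
  exact ZMod.val_injective k (by omega)

lemma order_four {k : ℕ} [NeZero k] (c : ZMod k) (hc0 : c ≠ 0)
    (hc2 : c + c ≠ 0) (hc4 : c + c + c + c = 0) :
    Nat.card (AddSubgroup.zmultiples c) = 4 := by
  rw [Nat.card_zmultiples]
  have h4 : addOrderOf c ∣ 4 := by
    apply addOrderOf_dvd_of_nsmul_eq_zero
    have : (4 : ℕ) • c = c + c + c + c := by
      rw [show (4 : ℕ) = 1 + 1 + 1 + 1 from rfl, add_nsmul, add_nsmul, add_nsmul, one_nsmul]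
    rw [this, hc4]
  have hle : addOrderOf c ≤ 4 := Nat.le_of_dvd (by norm_num) h4
  have h1 : addOrderOf c ≠ 1 := by
    intro h
    exact hc0 (AddMonoid.addOrderOf_eq_one_iff.mp h)
  have h2 : addOrderOf c ≠ 2 := by
    intro h
    have := addOrderOf_nsmul_eq_zero c
    rw [h, two_nsmul] at this
    exact hc2 this
  interval_cases h : addOrderOf c <;> omega

lemma subgroup_of_three {k : ℕ} [NeZero k] (a : ZMod k) (h3 : a + a + a = 0) :
    ∃ H : AddSubgroup (ZMod k), (H : Set (ZMod k)) = {0, a, a + a} := by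
  refine ⟨{ carrier := {0, a, a + a}, zero_mem' := ?_, add_mem' := ?_, neg_mem' := ?_ }, rfl⟩
  · intro x y hx hy
    simp only [Set.mem_insert_iff, Set.mem_singleton_iff] at hx hy ⊢
    rcases hx with rfl | rfl | rfl <;> rcases hy with rfl | rfl | rfl <;>
      first
        | (left; ring1)
        | (right; left; ring1)
        | (right; right; ring1)
        | (left; linear_combination h3)
        | (right; left; linear_combination h3)
        | (right; right; linear_combination h3)
  · exact Set.mem_insert 0 _
  · intro x hx
    simp only [Set.mem_insert_iff, Set.mem_singleton_iff] at hx ⊢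
    rcases hx with rfl | rfl | rfl
    · left; ring1
    · right; right; linear_combination -h3
    · right; left; linear_combination -h3

theorem three_element_extreme_sets (k : ℕ) [NeZero k] (hk : 3 ≤ k)
    (a b : ZMod k) (E : Finset (ZMod k)) (hE : E = {0, a, b})
    (hcard : E.card = 3) (hext : IsExtremeSet E) :
    (∃ H : AddSubgroup (ZMod k), (E : Set (ZMod k)) = (H : Set (ZMod k))) ∨
    (∃ H : AddSubgroup (ZMod k), Nat.card H = 4 ∧
      (E : Set (ZMod k)) ⊆ (H : Set (ZMod k))) := by
  obtain ⟨f, hf1, hf0, hcorr⟩ := hext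
  have hmem : ∀ x, x ∈ E ↔ x = 0 ∨ x = a ∨ x = b := by
    intro x; simp [hE]
  -- distinctness
  have ha0 : a ≠ 0 := by
    rintro rfl
    have hsub : E ⊆ {0, b} := by
      rw [hE]; intro x hx; simp at hx ⊢; tauto
    have := Finset.card_le_card hsub
    have h2 : ({0, b} : Finset (ZMod k)).card ≤ 2 :=
      (Finset.card_insert_le _ _).trans (by simp)
    omega
  have hb0 : b ≠ 0 := by
    rintro rfl
    have hsub : E ⊆ {0, a} := by
      rw [hE]; intro x hx; simp at hx ⊢; tauto
    have := Finset.card_le_card hsub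
    have h2 : ({0, a} : Finset (ZMod k)).card ≤ 2 :=
      (Finset.card_insert_le _ _).trans (by simp)
    omega
  have hab : a ≠ b := by
    rintro rfl
    have hsub : E ⊆ {0, a} := by
      rw [hE]; intro x hx; simp at hx ⊢; tauto
    have := Finset.card_le_card hsub
    have h2 : ({0, a} : Finset (ZMod k)).card ≤ 2 :=
      (Finset.card_insert_le _ _).trans (by simp)
    omega
  have hne : ∀ x ∈ E, f x ≠ 0 := by
    intro x hx h
    have := hf1 x hx
    rw [h] at this
    simp at this
  have h0E : (0 : ZMod k) ∈ E := (hmem 0).mpr (Or.inl rfl)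
  have haE : a ∈ E := (hmem a).mpr (Or.inr (Or.inl rfl))
  have hbE : b ∈ E := (hmem b).mpr (Or.inr (Or.inr rfl))
  have hsum : ∀ d : ZMod k, d ≠ 0 →
      f 0 * (starRingEnd ℂ) (f (0 - d)) + f a * (starRingEnd ℂ) (f (a - d)) +
        f b * (starRingEnd ℂ) (f (b - d)) = 0 := by
    intro d hd
    have h := hcorr d hd
    have h2 : ∑ x ∈ E, f x * (starRingEnd ℂ) (f (x - d)) = 0 := by
      rw [Finset.sum_subset (Finset.subset_univ E)
        (fun x _ hx => by rw [hf0 x hx, zero_mul])]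
      exact h
    rw [hE] at h2
    rw [Finset.sum_insert (by simp [Ne.symm ha0, Ne.symm hb0]),
      Finset.sum_insert (by simp [hab]), Finset.sum_singleton] at h2
    linear_combination h2
  -- condition from d = a
  have H1 : a + a = 0 ∨ b = -a ∨ b = a + a := by
    have h := hsum a ha0
    by_cases h1 : (-a : ZMod k) ∈ E
    · rw [hmem] at h1
      rcases h1 with h1 | h1 | h1
      · exact absurd (by linear_combination -h1 : a = 0) ha0
      · exact Or.inl (by linear_combination -h1)
      · exact Or.inr (Or.inl h1.symm)
    · by_cases h2 : (b - a : ZMod k) ∈ E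
      · rw [hmem] at h2
        rcases h2 with h2 | h2 | h2
        · exact absurd (by linear_combination -h2 : a = b) hab
        · exact Or.inr (Or.inr (by linear_combination h2))
        · exact absurd (by linear_combination -h2 : a = 0) ha0
      · exfalso
        rw [zero_sub, sub_self, hf0 _ h1, hf0 _ h2] at h
        simp only [map_zero, mul_zero, zero_add, add_zero] at h
        rcases mul_eq_zero.mp h with h | h
        · exact hne a haE h
        · exact hne 0 h0E (by simpa using h)
  -- condition from d = b
  have H2 : b + b = 0 ∨ a = -b ∨ a = b + b := by
    have h := hsum b hb0
    by_cases h1 : (-b : ZMod k) ∈ E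
    · rw [hmem] at h1
      rcases h1 with h1 | h1 | h1
      · exact absurd (by linear_combination -h1 : b = 0) hb0
      · exact Or.inr (Or.inl h1.symm)
      · exact Or.inl (by linear_combination -h1)
    · by_cases h2 : (a - b : ZMod k) ∈ E
      · rw [hmem] at h2
        rcases h2 with h2 | h2 | h2
        · exact absurd (by linear_combination h2 : a = b) hab
        · exact absurd (by linear_combination -h2 : b = 0) hb0
        · exact Or.inr (Or.inr (by linear_combination h2))
      · exfalso
        rw [zero_sub, sub_self, hf0 _ h1, hf0 _ h2] at h
        simp only [map_zero, mul_zero, zero_add, add_zero] at h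
        rcases mul_eq_zero.mp h with h | h
        · exact hne b hbE h
        · exact hne 0 h0E (by simpa using h)
  -- condition from d = a - b
  have H3 : b = a + a ∨ a = b + b ∨ a + a = b + b := by
    have hd : (a - b : ZMod k) ≠ 0 := sub_ne_zero.mpr hab
    have h := hsum (a - b) hd
    by_cases h1 : (b - a : ZMod k) ∈ E
    · rw [hmem] at h1
      rcases h1 with h1 | h1 | h1
      · exact absurd (by linear_combination -h1 : a = b) hab
      · exact Or.inl (by linear_combination h1)
      · exact absurd (by linear_combination -h1 : a = 0) ha0
    · by_cases h2 : (b + b - a : ZMod k) ∈ E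
      · rw [hmem] at h2
        rcases h2 with h2 | h2 | h2
        · exact Or.inr (Or.inl (by linear_combination -h2))
        · exact Or.inr (Or.inr (by linear_combination -h2))
        · exact absurd (by linear_combination h2 : b = a) (Ne.symm hab)
      · exfalso
        have e1 : (0 : ZMod k) - (a - b) = b - a := by ring
        have e2 : a - (a - b) = b := by ring
        have e3 : b - (a - b) = b + b - a := by ring
        rw [e1, e2, e3, hf0 _ h1, hf0 _ h2] at h
        simp only [map_zero, mul_zero, zero_add, add_zero] at h
        rcases mul_eq_zero.mp h with h | h
        · exact hne a haE h
        · exact hne b hbE (by simpa using h)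
  -- combinatorial analysis
  have hfin : (b = a + a ∧ a + a + a = 0) ∨
      (∃ c : ZMod k, c ≠ 0 ∧ c + c ≠ 0 ∧ c + c + c + c = 0 ∧
        a ∈ AddSubgroup.zmultiples c ∧ b ∈ AddSubgroup.zmultiples c) := by
    rcases H1 with h2a | hba | hb2a
    · rcases H2 with h2b | hab' | ha2b
      · exact absurd (two_torsion_unique a b h2a h2b ha0 hb0) hab
      · exact absurd (by linear_combination h2a - hab' : a = b) hab
      · refine Or.inr ⟨b, hb0, ?_, ?_, ?_, AddSubgroup.mem_zmultiples b⟩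
        · intro h; exact ha0 (by linear_combination ha2b + h)
        · linear_combination h2a - 2 * ha2b
        · rw [ha2b]
          exact add_mem (AddSubgroup.mem_zmultiples b) (AddSubgroup.mem_zmultiples b)
    · subst hba
      rcases H3 with h1 | h2 | h3
      · exact Or.inl ⟨h1, by linear_combination -h1⟩
      · exact Or.inl ⟨by linear_combination -h2, by linear_combination h2⟩
      · refine Or.inr ⟨a, ha0, ?_, by linear_combination h3,
          AddSubgroup.mem_zmultiples a, neg_mem (AddSubgroup.mem_zmultiples a)⟩
        intro h
        exact hab (by linear_combination h)
    · subst hb2a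
      rcases H2 with h2b | hab' | ha2b
      · refine Or.inr ⟨a, ha0, hb0, by linear_combination h2b,
          AddSubgroup.mem_zmultiples a,
          add_mem (AddSubgroup.mem_zmultiples a) (AddSubgroup.mem_zmultiples a)⟩
      · exact Or.inl ⟨rfl, by linear_combination hab'⟩
      · exact Or.inl ⟨rfl, by linear_combination -ha2b⟩
  rcases hfin with ⟨hb', h3⟩ | ⟨c, hc0, hc2, hc4, haH, hbH⟩
  · obtain ⟨H, hH⟩ := subgroup_of_three a h3
    refine Or.inl ⟨H, ?_⟩
    rw [hH, hE, hb']
    simp [Set.insert_comm]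
  · refine Or.inr ⟨AddSubgroup.zmultiples c, order_four c hc0 hc2 hc4, ?_⟩
    rw [hE]
    intro x hx
    simp only [Finset.coe_insert, Finset.coe_singleton, Set.mem_insert_iff,
      Set.mem_singleton_iff] at hx
    rcases hx with rfl | rfl | rfl
    · exact zero_mem _
    · exact haH
    · exact hbH
end

section
/- The set {0,1,2,3} is extreme in ZMod 5: the function f with f(0)=1, f(1)=f(2)=e^{2πi/3}, f(3)=1, f(4)=0 satisfies ∑_x f(x)·conj(f(x−d)) = 0 for every nonzero d ∈ ZMod 5. -/
open Complex Finset

theorem extreme_0123_zmod5 :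
    ∀ f : ZMod 5 → ℂ,
      f 0 = 1 → f 1 = Complex.exp ((2 * Real.pi / 3 : ℝ) * Complex.I) →
      f 2 = Complex.exp ((2 * Real.pi / 3 : ℝ) * Complex.I) →
      f 3 = 1 → f 4 = 0 →
      ∀ d : ZMod 5, d ≠ 0 →
        ∑ x : ZMod 5, f x * (starRingEnd ℂ) (f (x - d)) = 0 := by
  intro f h0 h1 h2 h3 h4 d hd
  set w : ℂ := Complex.exp ((2 * Real.pi / 3 : ℝ) * Complex.I) with hw
  have hconj : (starRingEnd ℂ) w = Complex.exp (-((2 * Real.pi / 3 : ℝ) * Complex.I)) := by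
    rw [hw, ← Complex.exp_conj, map_mul, Complex.conj_I, Complex.conj_ofReal, mul_neg]
  have hmul : w * (starRingEnd ℂ) w = 1 := by
    rw [hconj, hw, ← Complex.exp_add, add_neg_cancel, Complex.exp_zero]
  have hcos : Real.cos (2 * Real.pi / 3) = -(1/2) := by
    have h : (2 * Real.pi / 3) = Real.pi - Real.pi / 3 := by ring
    rw [h, Real.cos_pi_sub, Real.cos_pi_div_three]
  have hsum : 1 + w + (starRingEnd ℂ) w = 0 := by
    have h2c : w + (starRingEnd ℂ) w = 2 * Complex.cos ((2 * Real.pi / 3 : ℝ) : ℂ) := by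
      rw [Complex.two_cos, hconj, hw, neg_mul]
    have hc : Complex.cos ((2 * Real.pi / 3 : ℝ) : ℂ) = ((-(1/2) : ℝ) : ℂ) := by
      rw [← Complex.ofReal_cos, hcos]
    rw [add_assoc, h2c, hc]
    norm_num
  have hconj0 : (starRingEnd ℂ) (f 0) = 1 := by rw [h0, map_one]
  have hconj3 : (starRingEnd ℂ) (f 3) = 1 := by rw [h3, map_one]
  have hconj4 : (starRingEnd ℂ) (f 4) = 0 := by rw [h4, map_zero]
  have hexpand : ∑ x : ZMod 5, f x * (starRingEnd ℂ) (f (x - d)) =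
      f 0 * (starRingEnd ℂ) (f (0 - d)) + f 1 * (starRingEnd ℂ) (f (1 - d))
      + f 2 * (starRingEnd ℂ) (f (2 - d)) + f 3 * (starRingEnd ℂ) (f (3 - d))
      + f 4 * (starRingEnd ℂ) (f (4 - d)) :=
    Fin.sum_univ_five (f := fun x : Fin 5 =>
      f (show ZMod 5 from x) * (starRingEnd ℂ) (f ((show ZMod 5 from x) - d)))
  have hcases : ∀ e : ZMod 5, e ≠ 0 → e = 1 ∨ e = 2 ∨ e = 3 ∨ e = 4 := by decide
  rcases hcases d hd with rfl | rfl | rfl | rfl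
  · rw [hexpand,
      show ((0:ZMod 5) - 1) = 4 from rfl, show ((1:ZMod 5) - 1) = 0 from rfl,
      show ((2:ZMod 5) - 1) = 1 from rfl, show ((3:ZMod 5) - 1) = 2 from rfl,
      show ((4:ZMod 5) - 1) = 3 from rfl,
      h0, h1, h2, h3, h4]
    simp only [map_one, map_zero]
    linear_combination hmul + hsum
  · rw [hexpand,
      show ((0:ZMod 5) - 2) = 3 from rfl, show ((1:ZMod 5) - 2) = 4 from rfl,
      show ((2:ZMod 5) - 2) = 0 from rfl, show ((3:ZMod 5) - 2) = 1 from rfl,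
      show ((4:ZMod 5) - 2) = 2 from rfl,
      h0, h1, h2, h3, h4]
    simp only [map_one, map_zero]
    linear_combination hsum
  · rw [hexpand,
      show ((0:ZMod 5) - 3) = 2 from rfl, show ((1:ZMod 5) - 3) = 3 from rfl,
      show ((2:ZMod 5) - 3) = 4 from rfl, show ((3:ZMod 5) - 3) = 0 from rfl,
      show ((4:ZMod 5) - 3) = 1 from rfl,
      h0, h1, h2, h3, h4]
    simp only [map_one, map_zero]
    linear_combination hsum
  · rw [hexpand,
      show ((0:ZMod 5) - 4) = 1 from rfl, show ((1:ZMod 5) - 4) = 2 from rfl,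
      show ((2:ZMod 5) - 4) = 3 from rfl, show ((3:ZMod 5) - 4) = 4 from rfl,
      show ((4:ZMod 5) - 4) = 0 from rfl,
      h0, h1, h2, h3, h4]
    simp only [map_one, map_zero]
    linear_combination hmul + hsum
end

section
/- The set {0,2,3,4,7} is extreme in ZMod 12: the function f with values 1, e^{3πi/2}, e^{5πi/4}, 1, e^{πi/4} at 0, 2, 3, 4, 7 respectively (and 0 elsewhere) satisfies ∑_x f(x)·conj(f(x−d)) = 0 for every nonzero d ∈ ZMod 12. -/
open Complex Finset

theorem sum12_aux (F : ZMod 12 → ℂ) : ∑ x, F x =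
    F 0 + F 1 + F 2 + F 3 + F 4 + F 5 + F 6 + F 7 + F 8 + F 9 + F 10 + F 11 := by
  rw [show (univ : Finset (ZMod 12)) = {0,1,2,3,4,5,6,7,8,9,10,11} from by decide]
  rw [Finset.sum_insert (by decide), Finset.sum_insert (by decide), Finset.sum_insert (by decide),
    Finset.sum_insert (by decide), Finset.sum_insert (by decide), Finset.sum_insert (by decide),
    Finset.sum_insert (by decide), Finset.sum_insert (by decide), Finset.sum_insert (by decide),
    Finset.sum_insert (by decide), Finset.sum_insert (by decide), Finset.sum_singleton]
  ring

theorem extreme_02347_zmod12 :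
    ∀ f : ZMod 12 → ℂ,
      f 0 = 1 → f 2 = Complex.exp ((3 * Real.pi / 2 : ℝ) * Complex.I) →
      f 3 = Complex.exp ((5 * Real.pi / 4 : ℝ) * Complex.I) →
      f 4 = 1 → f 7 = Complex.exp ((Real.pi / 4 : ℝ) * Complex.I) →
      (∀ x : ZMod 12, x ∉ ({0, 2, 3, 4, 7} : Finset (ZMod 12)) → f x = 0) →
      ∀ d : ZMod 12, d ≠ 0 →
        ∑ x : ZMod 12, f x * (starRingEnd ℂ) (f (x - d)) = 0 := by
  intro f h0 h2 h3 h4 h7 hz d hd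
  set c := Complex.exp ((Real.pi / 4 : ℝ) * Complex.I) with hc
  have epi2 : Complex.exp (((Real.pi / 2 : ℝ) : ℂ) * Complex.I) = Complex.I := by
    rw [Complex.exp_mul_I]
    simp [← Complex.ofReal_cos, ← Complex.ofReal_sin]
  have epi : Complex.exp (((Real.pi : ℝ) : ℂ) * Complex.I) = -1 := Complex.exp_pi_mul_I
  have hc2 : c * c = Complex.I := by
    rw [hc, ← Complex.exp_add,
      show ((Real.pi / 4 : ℝ) : ℂ) * Complex.I + ((Real.pi / 4 : ℝ) : ℂ) * Complex.I
        = ((Real.pi / 2 : ℝ) : ℂ) * Complex.I by push_cast; ring, epi2]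
  have hc0 : c ≠ 0 := Complex.exp_ne_zero _
  have hcconj : c * (starRingEnd ℂ) c = 1 := by
    rw [hc, ← Complex.exp_conj, ← Complex.exp_add, map_mul, Complex.conj_I, Complex.conj_ofReal,
      show ((Real.pi / 4 : ℝ) : ℂ) * Complex.I + ((Real.pi / 4 : ℝ) : ℂ) * (-Complex.I) = 0 by ring,
      Complex.exp_zero]
  have hconj : (starRingEnd ℂ) c = -(c * Complex.I) := by
    have h1 : c * (-(c * Complex.I)) = 1 := by
      linear_combination (-Complex.I) * hc2 - Complex.I_mul_I
    exact mul_left_cancel₀ hc0 (hcconj.trans h1.symm)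
  have h2' : f 2 = -Complex.I := by
    rw [h2, show ((3 * Real.pi / 2 : ℝ) : ℂ) * Complex.I
      = ((Real.pi : ℝ) : ℂ) * Complex.I + ((Real.pi / 2 : ℝ) : ℂ) * Complex.I by push_cast; ring,
      Complex.exp_add, epi, epi2]
    ring
  have h3' : f 3 = -c := by
    rw [h3, show ((5 * Real.pi / 4 : ℝ) : ℂ) * Complex.I
      = ((Real.pi : ℝ) : ℂ) * Complex.I + ((Real.pi / 4 : ℝ) : ℂ) * Complex.I by push_cast; ring,
      Complex.exp_add, epi, ← hc]
    ring
  have hz1 : f 1 = 0 := hz 1 (by decide)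
  have hz5 : f 5 = 0 := hz 5 (by decide)
  have hz6 : f 6 = 0 := hz 6 (by decide)
  have hz8 : f 8 = 0 := hz 8 (by decide)
  have hz9 : f 9 = 0 := hz 9 (by decide)
  have hz10 : f 10 = 0 := hz 10 (by decide)
  have hz11 : f 11 = 0 := hz 11 (by decide)
  have key : ∀ e : ZMod 12, e ≠ 0 → (e = 1 ∨ e = 2 ∨ e = 3 ∨ e = 4 ∨ e = 5 ∨ e = 6 ∨ e = 7 ∨
      e = 8 ∨ e = 9 ∨ e = 10 ∨ e = 11) := by decide
  rcases key d hd with h|h|h|h|h|h|h|h|h|h|h <;> subst h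

  · rw [sum12_aux]
    simp only [show ((0:ZMod 12) - 1) = 11 from by decide,
      show ((1:ZMod 12) - 1) = 0 from by decide,
      show ((2:ZMod 12) - 1) = 1 from by decide,
      show ((3:ZMod 12) - 1) = 2 from by decide,
      show ((4:ZMod 12) - 1) = 3 from by decide,
      show ((5:ZMod 12) - 1) = 4 from by decide,
      show ((6:ZMod 12) - 1) = 5 from by decide,
      show ((7:ZMod 12) - 1) = 6 from by decide,
      show ((8:ZMod 12) - 1) = 7 from by decide,
      show ((9:ZMod 12) - 1) = 8 from by decide,
      show ((10:ZMod 12) - 1) = 9 from by decide,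
      show ((11:ZMod 12) - 1) = 10 from by decide]
    simp only [h0, h2', h3', h4, h7, hz1, hz5, hz6, hz8, hz9, hz10, hz11,
      map_zero, map_one, map_neg, Complex.conj_I, hconj, mul_zero, zero_mul, add_zero, zero_add,
      mul_neg, neg_mul, neg_neg, mul_one, one_mul]
    ring
  · rw [sum12_aux]
    simp only [show ((0:ZMod 12) - 2) = 10 from by decide,
      show ((1:ZMod 12) - 2) = 11 from by decide,
      show ((2:ZMod 12) - 2) = 0 from by decide,
      show ((3:ZMod 12) - 2) = 1 from by decide,
      show ((4:ZMod 12) - 2) = 2 from by decide,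
      show ((5:ZMod 12) - 2) = 3 from by decide,
      show ((6:ZMod 12) - 2) = 4 from by decide,
      show ((7:ZMod 12) - 2) = 5 from by decide,
      show ((8:ZMod 12) - 2) = 6 from by decide,
      show ((9:ZMod 12) - 2) = 7 from by decide,
      show ((10:ZMod 12) - 2) = 8 from by decide,
      show ((11:ZMod 12) - 2) = 9 from by decide]
    simp only [h0, h2', h3', h4, h7, hz1, hz5, hz6, hz8, hz9, hz10, hz11,
      map_zero, map_one, map_neg, Complex.conj_I, hconj, mul_zero, zero_mul, add_zero, zero_add,
      mul_neg, neg_mul, neg_neg, mul_one, one_mul]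
    ring
  · rw [sum12_aux]
    simp only [show ((0:ZMod 12) - 3) = 9 from by decide,
      show ((1:ZMod 12) - 3) = 10 from by decide,
      show ((2:ZMod 12) - 3) = 11 from by decide,
      show ((3:ZMod 12) - 3) = 0 from by decide,
      show ((4:ZMod 12) - 3) = 1 from by decide,
      show ((5:ZMod 12) - 3) = 2 from by decide,
      show ((6:ZMod 12) - 3) = 3 from by decide,
      show ((7:ZMod 12) - 3) = 4 from by decide,
      show ((8:ZMod 12) - 3) = 5 from by decide,
      show ((9:ZMod 12) - 3) = 6 from by decide,
      show ((10:ZMod 12) - 3) = 7 from by decide,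
      show ((11:ZMod 12) - 3) = 8 from by decide]
    simp only [h0, h2', h3', h4, h7, hz1, hz5, hz6, hz8, hz9, hz10, hz11,
      map_zero, map_one, map_neg, Complex.conj_I, hconj, mul_zero, zero_mul, add_zero, zero_add,
      mul_neg, neg_mul, neg_neg, mul_one, one_mul]
    ring
  · rw [sum12_aux]
    simp only [show ((0:ZMod 12) - 4) = 8 from by decide,
      show ((1:ZMod 12) - 4) = 9 from by decide,
      show ((2:ZMod 12) - 4) = 10 from by decide,
      show ((3:ZMod 12) - 4) = 11 from by decide,
      show ((4:ZMod 12) - 4) = 0 from by decide,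
      show ((5:ZMod 12) - 4) = 1 from by decide,
      show ((6:ZMod 12) - 4) = 2 from by decide,
      show ((7:ZMod 12) - 4) = 3 from by decide,
      show ((8:ZMod 12) - 4) = 4 from by decide,
      show ((9:ZMod 12) - 4) = 5 from by decide,
      show ((10:ZMod 12) - 4) = 6 from by decide,
      show ((11:ZMod 12) - 4) = 7 from by decide]
    simp only [h0, h2', h3', h4, h7, hz1, hz5, hz6, hz8, hz9, hz10, hz11,
      map_zero, map_one, map_neg, Complex.conj_I, hconj, mul_zero, zero_mul, add_zero, zero_add,
      mul_neg, neg_mul, neg_neg, mul_one, one_mul]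
    linear_combination Complex.I * hc2 + Complex.I_mul_I
  · rw [sum12_aux]
    simp only [show ((0:ZMod 12) - 5) = 7 from by decide,
      show ((1:ZMod 12) - 5) = 8 from by decide,
      show ((2:ZMod 12) - 5) = 9 from by decide,
      show ((3:ZMod 12) - 5) = 10 from by decide,
      show ((4:ZMod 12) - 5) = 11 from by decide,
      show ((5:ZMod 12) - 5) = 0 from by decide,
      show ((6:ZMod 12) - 5) = 1 from by decide,
      show ((7:ZMod 12) - 5) = 2 from by decide,
      show ((8:ZMod 12) - 5) = 3 from by decide,
      show ((9:ZMod 12) - 5) = 4 from by decide,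
      show ((10:ZMod 12) - 5) = 5 from by decide,
      show ((11:ZMod 12) - 5) = 6 from by decide]
    simp only [h0, h2', h3', h4, h7, hz1, hz5, hz6, hz8, hz9, hz10, hz11,
      map_zero, map_one, map_neg, Complex.conj_I, hconj, mul_zero, zero_mul, add_zero, zero_add,
      mul_neg, neg_mul, neg_neg, mul_one, one_mul]
    ring
  · rw [sum12_aux]
    simp only [show ((0:ZMod 12) - 6) = 6 from by decide,
      show ((1:ZMod 12) - 6) = 7 from by decide,
      show ((2:ZMod 12) - 6) = 8 from by decide,
      show ((3:ZMod 12) - 6) = 9 from by decide,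
      show ((4:ZMod 12) - 6) = 10 from by decide,
      show ((5:ZMod 12) - 6) = 11 from by decide,
      show ((6:ZMod 12) - 6) = 0 from by decide,
      show ((7:ZMod 12) - 6) = 1 from by decide,
      show ((8:ZMod 12) - 6) = 2 from by decide,
      show ((9:ZMod 12) - 6) = 3 from by decide,
      show ((10:ZMod 12) - 6) = 4 from by decide,
      show ((11:ZMod 12) - 6) = 5 from by decide]
    simp only [h0, h2', h3', h4, h7, hz1, hz5, hz6, hz8, hz9, hz10, hz11,
      map_zero, map_one, map_neg, Complex.conj_I, hconj, mul_zero, zero_mul, add_zero, zero_add,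
      mul_neg, neg_mul, neg_neg, mul_one, one_mul]
    ring
  · rw [sum12_aux]
    simp only [show ((0:ZMod 12) - 7) = 5 from by decide,
      show ((1:ZMod 12) - 7) = 6 from by decide,
      show ((2:ZMod 12) - 7) = 7 from by decide,
      show ((3:ZMod 12) - 7) = 8 from by decide,
      show ((4:ZMod 12) - 7) = 9 from by decide,
      show ((5:ZMod 12) - 7) = 10 from by decide,
      show ((6:ZMod 12) - 7) = 11 from by decide,
      show ((7:ZMod 12) - 7) = 0 from by decide,
      show ((8:ZMod 12) - 7) = 1 from by decide,
      show ((9:ZMod 12) - 7) = 2 from by decide,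
      show ((10:ZMod 12) - 7) = 3 from by decide,
      show ((11:ZMod 12) - 7) = 4 from by decide]
    simp only [h0, h2', h3', h4, h7, hz1, hz5, hz6, hz8, hz9, hz10, hz11,
      map_zero, map_one, map_neg, Complex.conj_I, hconj, mul_zero, zero_mul, add_zero, zero_add,
      mul_neg, neg_mul, neg_neg, mul_one, one_mul]
    linear_combination c * Complex.I_mul_I
  · rw [sum12_aux]
    simp only [show ((0:ZMod 12) - 8) = 4 from by decide,
      show ((1:ZMod 12) - 8) = 5 from by decide,
      show ((2:ZMod 12) - 8) = 6 from by decide,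
      show ((3:ZMod 12) - 8) = 7 from by decide,
      show ((4:ZMod 12) - 8) = 8 from by decide,
      show ((5:ZMod 12) - 8) = 9 from by decide,
      show ((6:ZMod 12) - 8) = 10 from by decide,
      show ((7:ZMod 12) - 8) = 11 from by decide,
      show ((8:ZMod 12) - 8) = 0 from by decide,
      show ((9:ZMod 12) - 8) = 1 from by decide,
      show ((10:ZMod 12) - 8) = 2 from by decide,
      show ((11:ZMod 12) - 8) = 3 from by decide]
    simp only [h0, h2', h3', h4, h7, hz1, hz5, hz6, hz8, hz9, hz10, hz11,
      map_zero, map_one, map_neg, Complex.conj_I, hconj, mul_zero, zero_mul, add_zero, zero_add,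
      mul_neg, neg_mul, neg_neg, mul_one, one_mul]
    linear_combination Complex.I * hc2 + Complex.I_mul_I
  · rw [sum12_aux]
    simp only [show ((0:ZMod 12) - 9) = 3 from by decide,
      show ((1:ZMod 12) - 9) = 4 from by decide,
      show ((2:ZMod 12) - 9) = 5 from by decide,
      show ((3:ZMod 12) - 9) = 6 from by decide,
      show ((4:ZMod 12) - 9) = 7 from by decide,
      show ((5:ZMod 12) - 9) = 8 from by decide,
      show ((6:ZMod 12) - 9) = 9 from by decide,
      show ((7:ZMod 12) - 9) = 10 from by decide,
      show ((8:ZMod 12) - 9) = 11 from by decide,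
      show ((9:ZMod 12) - 9) = 0 from by decide,
      show ((10:ZMod 12) - 9) = 1 from by decide,
      show ((11:ZMod 12) - 9) = 2 from by decide]
    simp only [h0, h2', h3', h4, h7, hz1, hz5, hz6, hz8, hz9, hz10, hz11,
      map_zero, map_one, map_neg, Complex.conj_I, hconj, mul_zero, zero_mul, add_zero, zero_add,
      mul_neg, neg_mul, neg_neg, mul_one, one_mul]
    ring
  · rw [sum12_aux]
    simp only [show ((0:ZMod 12) - 10) = 2 from by decide,
      show ((1:ZMod 12) - 10) = 3 from by decide,
      show ((2:ZMod 12) - 10) = 4 from by decide,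
      show ((3:ZMod 12) - 10) = 5 from by decide,
      show ((4:ZMod 12) - 10) = 6 from by decide,
      show ((5:ZMod 12) - 10) = 7 from by decide,
      show ((6:ZMod 12) - 10) = 8 from by decide,
      show ((7:ZMod 12) - 10) = 9 from by decide,
      show ((8:ZMod 12) - 10) = 10 from by decide,
      show ((9:ZMod 12) - 10) = 11 from by decide,
      show ((10:ZMod 12) - 10) = 0 from by decide,
      show ((11:ZMod 12) - 10) = 1 from by decide]
    simp only [h0, h2', h3', h4, h7, hz1, hz5, hz6, hz8, hz9, hz10, hz11,
      map_zero, map_one, map_neg, Complex.conj_I, hconj, mul_zero, zero_mul, add_zero, zero_add,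
      mul_neg, neg_mul, neg_neg, mul_one, one_mul]
    ring
  · rw [sum12_aux]
    simp only [show ((0:ZMod 12) - 11) = 1 from by decide,
      show ((1:ZMod 12) - 11) = 2 from by decide,
      show ((2:ZMod 12) - 11) = 3 from by decide,
      show ((3:ZMod 12) - 11) = 4 from by decide,
      show ((4:ZMod 12) - 11) = 5 from by decide,
      show ((5:ZMod 12) - 11) = 6 from by decide,
      show ((6:ZMod 12) - 11) = 7 from by decide,
      show ((7:ZMod 12) - 11) = 8 from by decide,
      show ((8:ZMod 12) - 11) = 9 from by decide,
      show ((9:ZMod 12) - 11) = 10 from by decide,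
      show ((10:ZMod 12) - 11) = 11 from by decide,
      show ((11:ZMod 12) - 11) = 0 from by decide]
    simp only [h0, h2', h3', h4, h7, hz1, hz5, hz6, hz8, hz9, hz10, hz11,
      map_zero, map_one, map_neg, Complex.conj_I, hconj, mul_zero, zero_mul, add_zero, zero_add,
      mul_neg, neg_mul, neg_neg, mul_one, one_mul]
    linear_combination (-c) * Complex.I_mul_I
end

section
/- The set {0,1,2,3,4,7} is extreme in ZMod 10: the function f with values 1, e^{5πi/6}, e^{2πi/3}, e^{5πi/6}, 1, e^{πi/6} at 0,1,2,3,4,7 respectively (and 0 elsewhere) has zero autocorrelation at every nonzero shift in ZMod 10. -/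
open Complex Finset

lemma sum_zmod10 (g : ZMod 10 → ℂ) : ∑ x : ZMod 10, g x
    = g 0 + g 1 + g 2 + g 3 + g 4 + g 5 + g 6 + g 7 + g 8 + g 9 := by
  have key : ∀ h : Fin 10 → ℂ, ∑ x, h x = h 0 + h 1 + h 2 + h 3 + h 4 + h 5 + h 6 + h 7 + h 8 + h 9 := by
    intro h
    rw [Fin.sum_univ_castSucc, Fin.sum_univ_castSucc, Fin.sum_univ_eight]
    rfl
  exact key g

theorem extreme_012347_zmod10 :
    ∀ f : ZMod 10 → ℂ,
      f 0 = 1 → f 1 = Complex.exp ((5 * Real.pi / 6 : ℝ) * Complex.I) →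
      f 2 = Complex.exp ((2 * Real.pi / 3 : ℝ) * Complex.I) →
      f 3 = Complex.exp ((5 * Real.pi / 6 : ℝ) * Complex.I) →
      f 4 = 1 → f 7 = Complex.exp ((Real.pi / 6 : ℝ) * Complex.I) →
      (∀ x : ZMod 10, x ∉ ({0, 1, 2, 3, 4, 7} : Finset (ZMod 10)) → f x = 0) →
      ∀ d : ZMod 10, d ≠ 0 →
        ∑ x : ZMod 10, f x * (starRingEnd ℂ) (f (x - d)) = 0 := by
  intro f h0 h1 h2 h3 h4 h7 hz d hd
  set ω : ℂ := Complex.exp ((Real.pi / 6 : ℝ) * Complex.I) with hωdef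
  have hu : ω^2 = (1 + Real.sqrt 3 * Complex.I)/2 := by
    rw [hωdef, ← Complex.exp_nat_mul,
      show (2:ℕ)*((Real.pi/6:ℝ)*Complex.I) = (Real.pi/3:ℝ)*Complex.I by push_cast; ring,
      Complex.exp_mul_I, ← Complex.ofReal_cos, ← Complex.ofReal_sin,
      Real.cos_pi_div_three, Real.sin_pi_div_three]
    push_cast; ring
  have ht : (Real.sqrt 3 : ℂ)^2 = 3 := by
    norm_cast
    rw [Real.sq_sqrt] <;> norm_num
  have hP : ω^4 - ω^2 + 1 = 0 := by
    rw [show (4:ℕ) = 2*2 from rfl, pow_mul, hu]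
    linear_combination (Complex.I^2/4) * ht + (3/4) * Complex.I_sq
  have h12 : ω^12 = 1 := by
    rw [hωdef, ← Complex.exp_nat_mul,
      show (12:ℕ)*((Real.pi/6:ℝ)*Complex.I) = 2*(Real.pi:ℂ)*Complex.I by push_cast; ring,
      Complex.exp_two_pi_mul_I]
  have habs : (starRingEnd ℂ) ω * ω = 1 := by
    rw [hωdef, ← Complex.exp_conj, ← Complex.exp_add,
      show (starRingEnd ℂ) (((Real.pi/6:ℝ):ℂ)*Complex.I) + ((Real.pi/6:ℝ):ℂ)*Complex.I = 0 by
        rw [map_mul, Complex.conj_ofReal, Complex.conj_I]; ring,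
      Complex.exp_zero]
  have cconj : (starRingEnd ℂ) ω = ω^11 := by
    linear_combination ω^11 * habs - ((starRingEnd ℂ) ω) * h12
  have e1 : f 1 = ω^5 := by
    rw [h1, hωdef, ← Complex.exp_nat_mul]
    congr 1
    push_cast; ring
  have e2 : f 2 = ω^4 := by
    rw [h2, hωdef, ← Complex.exp_nat_mul]
    congr 1
    push_cast; ring
  have e3 : f 3 = ω^5 := by
    rw [h3, hωdef, ← Complex.exp_nat_mul]
    congr 1
    push_cast; ring
  have e7 : f 7 = ω^1 := by rw [h7, pow_one]
  have z5 : f 5 = 0 := hz 5 (by decide)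
  have z6 : f 6 = 0 := hz 6 (by decide)
  have z8 : f 8 = 0 := hz 8 (by decide)
  have z9 : f 9 = 0 := hz 9 (by decide)
  have hcases : d = 1 ∨ d = 2 ∨ d = 3 ∨ d = 4 ∨ d = 5 ∨ d = 6 ∨ d = 7 ∨ d = 8 ∨ d = 9 := by
    revert hd; revert d; decide
  rcases hcases with h|h|h|h|h|h|h|h|h <;> subst h
  · rw [sum_zmod10]
    simp only [show (0:ZMod 10) - 1 = 9 from rfl, show (1:ZMod 10) - 1 = 0 from rfl, show (2:ZMod 10) - 1 = 1 from rfl, show (3:ZMod 10) - 1 = 2 from rfl, show (4:ZMod 10) - 1 = 3 from rfl, show (5:ZMod 10) - 1 = 4 from rfl, show (6:ZMod 10) - 1 = 5 from rfl, show (7:ZMod 10) - 1 = 6 from rfl, show (8:ZMod 10) - 1 = 7 from rfl, show (9:ZMod 10) - 1 = 8 from rfl]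
    rw [h0, e1, e2, e3, h4, e7, z5, z6, z8, z9]
    simp only [map_pow, map_one, map_zero, cconj]
    linear_combination (ω^5 + ω^7 - ω^11 - ω^13 + ω^17 + ω^19 - ω^23 - ω^25 + ω^29 + ω^31 - ω^35 - ω^37 + ω^41 + ω^43 - ω^47 + ω^51 + ω^53 + ω^55) * hP
  · rw [sum_zmod10]
    simp only [show (0:ZMod 10) - 2 = 8 from rfl, show (1:ZMod 10) - 2 = 9 from rfl, show (2:ZMod 10) - 2 = 0 from rfl, show (3:ZMod 10) - 2 = 1 from rfl, show (4:ZMod 10) - 2 = 2 from rfl, show (5:ZMod 10) - 2 = 3 from rfl, show (6:ZMod 10) - 2 = 4 from rfl, show (7:ZMod 10) - 2 = 5 from rfl, show (8:ZMod 10) - 2 = 6 from rfl, show (9:ZMod 10) - 2 = 7 from rfl]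
    rw [h0, e1, e2, e3, h4, e7, z5, z6, z8, z9]
    simp only [map_pow, map_one, map_zero, cconj]
    linear_combination (ω^4 + ω^6 - ω^10 - ω^12 + ω^16 + ω^18 - ω^22 - ω^24 + ω^28 + ω^30 - ω^34 - ω^36 + ω^40 + ω^42 + ω^44 - ω^48 - ω^50 + ω^54 + ω^56) * hP
  · rw [sum_zmod10]
    simp only [show (0:ZMod 10) - 3 = 7 from rfl, show (1:ZMod 10) - 3 = 8 from rfl, show (2:ZMod 10) - 3 = 9 from rfl, show (3:ZMod 10) - 3 = 0 from rfl, show (4:ZMod 10) - 3 = 1 from rfl, show (5:ZMod 10) - 3 = 2 from rfl, show (6:ZMod 10) - 3 = 3 from rfl, show (7:ZMod 10) - 3 = 4 from rfl, show (8:ZMod 10) - 3 = 5 from rfl, show (9:ZMod 10) - 3 = 6 from rfl]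
    rw [h0, e1, e2, e3, h4, e7, z5, z6, z8, z9]
    simp only [map_pow, map_one, map_zero, cconj]
    linear_combination (ω^1 + ω^3 + ω^5 - ω^9 + ω^13 + ω^15 - ω^19 - ω^21 + ω^25 + ω^27 - ω^31 - ω^33 + ω^37 + ω^39 - ω^43 - ω^45 + ω^49 + ω^51) * hP
  · rw [sum_zmod10]
    simp only [show (0:ZMod 10) - 4 = 6 from rfl, show (1:ZMod 10) - 4 = 7 from rfl, show (2:ZMod 10) - 4 = 8 from rfl, show (3:ZMod 10) - 4 = 9 from rfl, show (4:ZMod 10) - 4 = 0 from rfl, show (5:ZMod 10) - 4 = 1 from rfl, show (6:ZMod 10) - 4 = 2 from rfl, show (7:ZMod 10) - 4 = 3 from rfl, show (8:ZMod 10) - 4 = 4 from rfl, show (9:ZMod 10) - 4 = 5 from rfl]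
    rw [h0, e1, e2, e3, h4, e7, z5, z6, z8, z9]
    simp only [map_pow, map_one, map_zero, cconj]
    linear_combination (ω^0 + ω^2 - ω^6 - ω^8 + ω^12 + ω^14 + ω^16 - ω^20 - ω^22 + ω^26 + ω^28 - ω^32 - ω^34 + ω^38 + ω^40 - ω^44 - ω^46 + ω^50 + ω^52) * hP
  · rw [sum_zmod10]
    simp only [show (0:ZMod 10) - 5 = 5 from rfl, show (1:ZMod 10) - 5 = 6 from rfl, show (2:ZMod 10) - 5 = 7 from rfl, show (3:ZMod 10) - 5 = 8 from rfl, show (4:ZMod 10) - 5 = 9 from rfl, show (5:ZMod 10) - 5 = 0 from rfl, show (6:ZMod 10) - 5 = 1 from rfl, show (7:ZMod 10) - 5 = 2 from rfl, show (8:ZMod 10) - 5 = 3 from rfl, show (9:ZMod 10) - 5 = 4 from rfl]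
    rw [h0, e1, e2, e3, h4, e7, z5, z6, z8, z9]
    simp only [map_pow, map_one, map_zero, cconj]
    linear_combination (ω^15 + ω^17 - ω^21 - ω^23 + ω^27 + ω^29 - ω^33 - ω^35 + ω^39 + ω^41) * hP
  · rw [sum_zmod10]
    simp only [show (0:ZMod 10) - 6 = 4 from rfl, show (1:ZMod 10) - 6 = 5 from rfl, show (2:ZMod 10) - 6 = 6 from rfl, show (3:ZMod 10) - 6 = 7 from rfl, show (4:ZMod 10) - 6 = 8 from rfl, show (5:ZMod 10) - 6 = 9 from rfl, show (6:ZMod 10) - 6 = 0 from rfl, show (7:ZMod 10) - 6 = 1 from rfl, show (8:ZMod 10) - 6 = 2 from rfl, show (9:ZMod 10) - 6 = 3 from rfl]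
    rw [h0, e1, e2, e3, h4, e7, z5, z6, z8, z9]
    simp only [map_pow, map_one, map_zero, cconj]
    linear_combination (ω^0 + ω^2 - ω^6 - ω^8 + ω^12 + ω^14 + ω^16 - ω^20 - ω^22 + ω^26 + ω^28 - ω^32 - ω^34 + ω^38 + ω^40 - ω^44 - ω^46 + ω^50 + ω^52) * hP
  · rw [sum_zmod10]
    simp only [show (0:ZMod 10) - 7 = 3 from rfl, show (1:ZMod 10) - 7 = 4 from rfl, show (2:ZMod 10) - 7 = 5 from rfl, show (3:ZMod 10) - 7 = 6 from rfl, show (4:ZMod 10) - 7 = 7 from rfl, show (5:ZMod 10) - 7 = 8 from rfl, show (6:ZMod 10) - 7 = 9 from rfl, show (7:ZMod 10) - 7 = 0 from rfl, show (8:ZMod 10) - 7 = 1 from rfl, show (9:ZMod 10) - 7 = 2 from rfl]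
    rw [h0, e1, e2, e3, h4, e7, z5, z6, z8, z9]
    simp only [map_pow, map_one, map_zero, cconj]
    linear_combination (ω^1 + ω^3 + ω^5 - ω^9 + ω^13 + ω^15 - ω^19 - ω^21 + ω^25 + ω^27 - ω^31 - ω^33 + ω^37 + ω^39 - ω^43 - ω^45 + ω^49 + ω^51) * hP
  · rw [sum_zmod10]
    simp only [show (0:ZMod 10) - 8 = 2 from rfl, show (1:ZMod 10) - 8 = 3 from rfl, show (2:ZMod 10) - 8 = 4 from rfl, show (3:ZMod 10) - 8 = 5 from rfl, show (4:ZMod 10) - 8 = 6 from rfl, show (5:ZMod 10) - 8 = 7 from rfl, show (6:ZMod 10) - 8 = 8 from rfl, show (7:ZMod 10) - 8 = 9 from rfl, show (8:ZMod 10) - 8 = 0 from rfl, show (9:ZMod 10) - 8 = 1 from rfl]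
    rw [h0, e1, e2, e3, h4, e7, z5, z6, z8, z9]
    simp only [map_pow, map_one, map_zero, cconj]
    linear_combination (ω^4 + ω^6 - ω^10 - ω^12 + ω^16 + ω^18 - ω^22 - ω^24 + ω^28 + ω^30 - ω^34 - ω^36 + ω^40 + ω^42 + ω^44 - ω^48 - ω^50 + ω^54 + ω^56) * hP
  · rw [sum_zmod10]
    simp only [show (0:ZMod 10) - 9 = 1 from rfl, show (1:ZMod 10) - 9 = 2 from rfl, show (2:ZMod 10) - 9 = 3 from rfl, show (3:ZMod 10) - 9 = 4 from rfl, show (4:ZMod 10) - 9 = 5 from rfl, show (5:ZMod 10) - 9 = 6 from rfl, show (6:ZMod 10) - 9 = 7 from rfl, show (7:ZMod 10) - 9 = 8 from rfl, show (8:ZMod 10) - 9 = 9 from rfl, show (9:ZMod 10) - 9 = 0 from rfl]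
    rw [h0, e1, e2, e3, h4, e7, z5, z6, z8, z9]
    simp only [map_pow, map_one, map_zero, cconj]
    linear_combination (ω^5 + ω^7 - ω^11 - ω^13 + ω^17 + ω^19 - ω^23 - ω^25 + ω^29 + ω^31 - ω^35 - ω^37 + ω^41 + ω^43 - ω^47 + ω^51 + ω^53 + ω^55) * hP
end

section
/- The set {0,1,3,4,6,7,9,10} is extreme in ZMod 12: the function f with values 1, e^{7πi/6}, 1, e^{5πi/3}, −1, e^{7πi/6}, −1, e^{5πi/3} at 0,1,3,4,6,7,9,10 respectively (0 elsewhere) has zero autocorrelation at every nonzero shift. Moreover this set equals {0,1,3,4} + {0,6} and {0,3,6,9} + {0,1} as sum-sets. -/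
open Complex Finset Pointwise

private lemma sum_zmod12' (g : ZMod 12 → ℂ) : ∑ x : ZMod 12, g x =
    g 0 + g 1 + g 2 + g 3 + g 4 + g 5 + g 6 + g 7 + g 8 + g 9 + g 10 + g 11 := by
  rw [show (univ : Finset (ZMod 12)) = {0,1,2,3,4,5,6,7,8,9,10,11} from by decide]
  rw [Finset.sum_insert (by decide), Finset.sum_insert (by decide),
      Finset.sum_insert (by decide), Finset.sum_insert (by decide),
      Finset.sum_insert (by decide), Finset.sum_insert (by decide),
      Finset.sum_insert (by decide), Finset.sum_insert (by decide),
      Finset.sum_insert (by decide), Finset.sum_insert (by decide),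
      Finset.sum_insert (by decide), Finset.sum_singleton]
  ring

theorem extreme_eight_set_zmod12 :
    (∀ f : ZMod 12 → ℂ,
      f 0 = 1 → f 1 = Complex.exp ((7 * Real.pi / 6 : ℝ) * Complex.I) →
      f 3 = 1 → f 4 = Complex.exp ((5 * Real.pi / 3 : ℝ) * Complex.I) →
      f 6 = -1 → f 7 = Complex.exp ((7 * Real.pi / 6 : ℝ) * Complex.I) →
      f 9 = -1 → f 10 = Complex.exp ((5 * Real.pi / 3 : ℝ) * Complex.I) →
      (∀ x : ZMod 12,
        x ∉ ({0, 1, 3, 4, 6, 7, 9, 10} : Finset (ZMod 12)) → f x = 0) →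
      ∀ d : ZMod 12, d ≠ 0 →
        ∑ x : ZMod 12, f x * (starRingEnd ℂ) (f (x - d)) = 0) ∧
    ({0, 1, 3, 4} : Finset (ZMod 12)) + ({0, 6} : Finset (ZMod 12)) =
      ({0, 1, 3, 4, 6, 7, 9, 10} : Finset (ZMod 12)) ∧
    ({0, 3, 6, 9} : Finset (ZMod 12)) + ({0, 1} : Finset (ZMod 12)) =
      ({0, 1, 3, 4, 6, 7, 9, 10} : Finset (ZMod 12)) := by
  refine ⟨?_, by decide, by decide⟩
  intro f h0 h1 h3 h4 h6 h7 h9 h10 hsupp d hd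
  set z : ℂ := Complex.exp ((Real.pi / 6 : ℝ) * Complex.I) with hzdef
  have hz6 : z ^ 6 = -1 := by
    have e : z ^ 6 = Complex.exp ((Real.pi : ℂ) * Complex.I) := by
      rw [hzdef, ← Complex.exp_nat_mul]
      congr 1
      push_cast
      ring
    rw [e, Complex.exp_pi_mul_I]
  have hz12 : z ^ 12 = 1 := by
    have : z ^ 12 = (z ^ 6) * (z ^ 6) := by ring
    rw [this, hz6]
    ring
  have ha : Complex.exp ((7 * Real.pi / 6 : ℝ) * Complex.I) = z ^ 7 := by
    rw [hzdef, ← Complex.exp_nat_mul]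
    congr 1
    push_cast
    ring
  have hb : Complex.exp ((5 * Real.pi / 3 : ℝ) * Complex.I) = z ^ 10 := by
    rw [hzdef, ← Complex.exp_nat_mul]
    congr 1
    push_cast
    ring
  have hcz : (starRingEnd ℂ) z = z ^ 11 := by
    have e1 : (starRingEnd ℂ) z * z = 1 := by
      rw [hzdef, ← Complex.exp_conj, ← Complex.exp_add]
      rw [show (starRingEnd ℂ) (((Real.pi / 6 : ℝ) : ℂ) * Complex.I) +
          ((Real.pi / 6 : ℝ) : ℂ) * Complex.I = 0 by
        simp only [map_mul, Complex.conj_ofReal, Complex.conj_I]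
        ring]
      exact Complex.exp_zero
    have e2 : z ^ 11 * z = 1 := by
      have : z ^ 11 * z = z ^ 12 := by ring
      rw [this, hz12]
    have hzne : z ≠ 0 := Complex.exp_ne_zero _
    exact mul_right_cancel₀ hzne (e1.trans e2.symm)
  have hca : (starRingEnd ℂ) (z ^ 7) = z ^ 5 := by
    rw [map_pow, hcz]
    have : (z ^ 11) ^ 7 = (z ^ 12) ^ 6 * z ^ 5 := by ring
    rw [this, hz12]
    ring
  have hcb : (starRingEnd ℂ) (z ^ 10) = z ^ 2 := by
    rw [map_pow, hcz]
    have : (z ^ 11) ^ 10 = (z ^ 12) ^ 9 * z ^ 2 := by ring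
    rw [this, hz12]
    ring
  have v0 : f 0 = 1 := h0
  have v1 : f 1 = z ^ 7 := h1.trans ha
  have v2 : f 2 = 0 := hsupp 2 (by decide)
  have v3 : f 3 = 1 := h3
  have v4 : f 4 = z ^ 10 := h4.trans hb
  have v5 : f 5 = 0 := hsupp 5 (by decide)
  have v6 : f 6 = -1 := h6
  have v7 : f 7 = z ^ 7 := h7.trans ha
  have v8 : f 8 = 0 := hsupp 8 (by decide)
  have v9 : f 9 = -1 := h9
  have v10 : f 10 = z ^ 10 := h10.trans hb
  have v11 : f 11 = 0 := hsupp 11 (by decide)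
  rw [sum_zmod12']
  have hd' : ∀ e : ZMod 12, e ≠ 0 → e = 1 ∨ e = 2 ∨ e = 3 ∨ e = 4 ∨ e = 5 ∨ e = 6 ∨
      e = 7 ∨ e = 8 ∨ e = 9 ∨ e = 10 ∨ e = 11 := by decide
  rcases hd' d hd with rfl | rfl | rfl | rfl | rfl | rfl | rfl | rfl | rfl | rfl | rfl
  · simp only [show (0 : ZMod 12) - 1 = 11 from by decide,
      show (1 : ZMod 12) - 1 = 0 from by decide,
      show (2 : ZMod 12) - 1 = 1 from by decide,
      show (3 : ZMod 12) - 1 = 2 from by decide,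
      show (4 : ZMod 12) - 1 = 3 from by decide,
      show (5 : ZMod 12) - 1 = 4 from by decide,
      show (6 : ZMod 12) - 1 = 5 from by decide,
      show (7 : ZMod 12) - 1 = 6 from by decide,
      show (8 : ZMod 12) - 1 = 7 from by decide,
      show (9 : ZMod 12) - 1 = 8 from by decide,
      show (10 : ZMod 12) - 1 = 9 from by decide,
      show (11 : ZMod 12) - 1 = 10 from by decide,
      v0, v1, v2, v3, v4, v5, v6, v7, v8, v9, v10, v11, hca, hcb, map_one, map_zero, map_neg]
    linear_combination ((0 : ℂ)) * hz6
  · simp only [show (0 : ZMod 12) - 2 = 10 from by decide,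
      show (1 : ZMod 12) - 2 = 11 from by decide,
      show (2 : ZMod 12) - 2 = 0 from by decide,
      show (3 : ZMod 12) - 2 = 1 from by decide,
      show (4 : ZMod 12) - 2 = 2 from by decide,
      show (5 : ZMod 12) - 2 = 3 from by decide,
      show (6 : ZMod 12) - 2 = 4 from by decide,
      show (7 : ZMod 12) - 2 = 5 from by decide,
      show (8 : ZMod 12) - 2 = 6 from by decide,
      show (9 : ZMod 12) - 2 = 7 from by decide,
      show (10 : ZMod 12) - 2 = 8 from by decide,
      show (11 : ZMod 12) - 2 = 9 from by decide,
      v0, v1, v2, v3, v4, v5, v6, v7, v8, v9, v10, v11, hca, hcb, map_one, map_zero, map_neg]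
    linear_combination ((0 : ℂ)) * hz6
  · simp only [show (0 : ZMod 12) - 3 = 9 from by decide,
      show (1 : ZMod 12) - 3 = 10 from by decide,
      show (2 : ZMod 12) - 3 = 11 from by decide,
      show (3 : ZMod 12) - 3 = 0 from by decide,
      show (4 : ZMod 12) - 3 = 1 from by decide,
      show (5 : ZMod 12) - 3 = 2 from by decide,
      show (6 : ZMod 12) - 3 = 3 from by decide,
      show (7 : ZMod 12) - 3 = 4 from by decide,
      show (8 : ZMod 12) - 3 = 5 from by decide,
      show (9 : ZMod 12) - 3 = 6 from by decide,
      show (10 : ZMod 12) - 3 = 7 from by decide,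
      show (11 : ZMod 12) - 3 = 8 from by decide,
      v0, v1, v2, v3, v4, v5, v6, v7, v8, v9, v10, v11, hca, hcb, map_one, map_zero, map_neg]
    linear_combination ((2 : ℂ) * z ^ 3) * hz6 + ((2 : ℂ) * z ^ 3) * hz12
  · simp only [show (0 : ZMod 12) - 4 = 8 from by decide,
      show (1 : ZMod 12) - 4 = 9 from by decide,
      show (2 : ZMod 12) - 4 = 10 from by decide,
      show (3 : ZMod 12) - 4 = 11 from by decide,
      show (4 : ZMod 12) - 4 = 0 from by decide,
      show (5 : ZMod 12) - 4 = 1 from by decide,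
      show (6 : ZMod 12) - 4 = 2 from by decide,
      show (7 : ZMod 12) - 4 = 3 from by decide,
      show (8 : ZMod 12) - 4 = 4 from by decide,
      show (9 : ZMod 12) - 4 = 5 from by decide,
      show (10 : ZMod 12) - 4 = 6 from by decide,
      show (11 : ZMod 12) - 4 = 7 from by decide,
      v0, v1, v2, v3, v4, v5, v6, v7, v8, v9, v10, v11, hca, hcb, map_one, map_zero, map_neg]
    linear_combination ((0 : ℂ)) * hz6
  · simp only [show (0 : ZMod 12) - 5 = 7 from by decide,
      show (1 : ZMod 12) - 5 = 8 from by decide,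
      show (2 : ZMod 12) - 5 = 9 from by decide,
      show (3 : ZMod 12) - 5 = 10 from by decide,
      show (4 : ZMod 12) - 5 = 11 from by decide,
      show (5 : ZMod 12) - 5 = 0 from by decide,
      show (6 : ZMod 12) - 5 = 1 from by decide,
      show (7 : ZMod 12) - 5 = 2 from by decide,
      show (8 : ZMod 12) - 5 = 3 from by decide,
      show (9 : ZMod 12) - 5 = 4 from by decide,
      show (10 : ZMod 12) - 5 = 5 from by decide,
      show (11 : ZMod 12) - 5 = 6 from by decide,
      v0, v1, v2, v3, v4, v5, v6, v7, v8, v9, v10, v11, hca, hcb, map_one, map_zero, map_neg]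
    linear_combination ((0 : ℂ)) * hz6
  · simp only [show (0 : ZMod 12) - 6 = 6 from by decide,
      show (1 : ZMod 12) - 6 = 7 from by decide,
      show (2 : ZMod 12) - 6 = 8 from by decide,
      show (3 : ZMod 12) - 6 = 9 from by decide,
      show (4 : ZMod 12) - 6 = 10 from by decide,
      show (5 : ZMod 12) - 6 = 11 from by decide,
      show (6 : ZMod 12) - 6 = 0 from by decide,
      show (7 : ZMod 12) - 6 = 1 from by decide,
      show (8 : ZMod 12) - 6 = 2 from by decide,
      show (9 : ZMod 12) - 6 = 3 from by decide,
      show (10 : ZMod 12) - 6 = 4 from by decide,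
      show (11 : ZMod 12) - 6 = 5 from by decide,
      v0, v1, v2, v3, v4, v5, v6, v7, v8, v9, v10, v11, hca, hcb, map_one, map_zero, map_neg]
    linear_combination ((0 : ℂ)) * hz6 + ((4 : ℂ)) * hz12
  · simp only [show (0 : ZMod 12) - 7 = 5 from by decide,
      show (1 : ZMod 12) - 7 = 6 from by decide,
      show (2 : ZMod 12) - 7 = 7 from by decide,
      show (3 : ZMod 12) - 7 = 8 from by decide,
      show (4 : ZMod 12) - 7 = 9 from by decide,
      show (5 : ZMod 12) - 7 = 10 from by decide,
      show (6 : ZMod 12) - 7 = 11 from by decide,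
      show (7 : ZMod 12) - 7 = 0 from by decide,
      show (8 : ZMod 12) - 7 = 1 from by decide,
      show (9 : ZMod 12) - 7 = 2 from by decide,
      show (10 : ZMod 12) - 7 = 3 from by decide,
      show (11 : ZMod 12) - 7 = 4 from by decide,
      v0, v1, v2, v3, v4, v5, v6, v7, v8, v9, v10, v11, hca, hcb, map_one, map_zero, map_neg]
    linear_combination ((0 : ℂ)) * hz6
  · simp only [show (0 : ZMod 12) - 8 = 4 from by decide,
      show (1 : ZMod 12) - 8 = 5 from by decide,
      show (2 : ZMod 12) - 8 = 6 from by decide,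
      show (3 : ZMod 12) - 8 = 7 from by decide,
      show (4 : ZMod 12) - 8 = 8 from by decide,
      show (5 : ZMod 12) - 8 = 9 from by decide,
      show (6 : ZMod 12) - 8 = 10 from by decide,
      show (7 : ZMod 12) - 8 = 11 from by decide,
      show (8 : ZMod 12) - 8 = 0 from by decide,
      show (9 : ZMod 12) - 8 = 1 from by decide,
      show (10 : ZMod 12) - 8 = 2 from by decide,
      show (11 : ZMod 12) - 8 = 3 from by decide,
      v0, v1, v2, v3, v4, v5, v6, v7, v8, v9, v10, v11, hca, hcb, map_one, map_zero, map_neg]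
    linear_combination ((0 : ℂ)) * hz6
  · simp only [show (0 : ZMod 12) - 9 = 3 from by decide,
      show (1 : ZMod 12) - 9 = 4 from by decide,
      show (2 : ZMod 12) - 9 = 5 from by decide,
      show (3 : ZMod 12) - 9 = 6 from by decide,
      show (4 : ZMod 12) - 9 = 7 from by decide,
      show (5 : ZMod 12) - 9 = 8 from by decide,
      show (6 : ZMod 12) - 9 = 9 from by decide,
      show (7 : ZMod 12) - 9 = 10 from by decide,
      show (8 : ZMod 12) - 9 = 11 from by decide,
      show (9 : ZMod 12) - 9 = 0 from by decide,
      show (10 : ZMod 12) - 9 = 1 from by decide,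
      show (11 : ZMod 12) - 9 = 2 from by decide,
      v0, v1, v2, v3, v4, v5, v6, v7, v8, v9, v10, v11, hca, hcb, map_one, map_zero, map_neg]
    linear_combination ((2 : ℂ) * z ^ 3) * hz6 + ((2 : ℂ) * z ^ 3) * hz12
  · simp only [show (0 : ZMod 12) - 10 = 2 from by decide,
      show (1 : ZMod 12) - 10 = 3 from by decide,
      show (2 : ZMod 12) - 10 = 4 from by decide,
      show (3 : ZMod 12) - 10 = 5 from by decide,
      show (4 : ZMod 12) - 10 = 6 from by decide,
      show (5 : ZMod 12) - 10 = 7 from by decide,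
      show (6 : ZMod 12) - 10 = 8 from by decide,
      show (7 : ZMod 12) - 10 = 9 from by decide,
      show (8 : ZMod 12) - 10 = 10 from by decide,
      show (9 : ZMod 12) - 10 = 11 from by decide,
      show (10 : ZMod 12) - 10 = 0 from by decide,
      show (11 : ZMod 12) - 10 = 1 from by decide,
      v0, v1, v2, v3, v4, v5, v6, v7, v8, v9, v10, v11, hca, hcb, map_one, map_zero, map_neg]
    linear_combination ((0 : ℂ)) * hz6
  · simp only [show (0 : ZMod 12) - 11 = 1 from by decide,
      show (1 : ZMod 12) - 11 = 2 from by decide,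
      show (2 : ZMod 12) - 11 = 3 from by decide,
      show (3 : ZMod 12) - 11 = 4 from by decide,
      show (4 : ZMod 12) - 11 = 5 from by decide,
      show (5 : ZMod 12) - 11 = 6 from by decide,
      show (6 : ZMod 12) - 11 = 7 from by decide,
      show (7 : ZMod 12) - 11 = 8 from by decide,
      show (8 : ZMod 12) - 11 = 9 from by decide,
      show (9 : ZMod 12) - 11 = 10 from by decide,
      show (10 : ZMod 12) - 11 = 11 from by decide,
      show (11 : ZMod 12) - 11 = 0 from by decide,
      v0, v1, v2, v3, v4, v5, v6, v7, v8, v9, v10, v11, hca, hcb, map_one, map_zero, map_neg]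
    linear_combination ((0 : ℂ)) * hz6
end

section
/- The 5-element set {(0,0,0), (0,0,1), (0,1,0), (0,1,1), (1,0,0)} is extreme in (ZMod 2)³: the function f with values 1, −1, −1, −1, i at these points respectively (and 0 elsewhere) satisfies ∑_x f(x)·conj(f(x−d)) = 0 for every nonzero d ∈ (ZMod 2)³. -/
open Complex Finset

theorem extreme_five_set_zmod2_cubed :
    ∀ f : ZMod 2 × ZMod 2 × ZMod 2 → ℂ,
      f (0, 0, 0) = 1 → f (0, 0, 1) = -1 → f (0, 1, 0) = -1 →
      f (0, 1, 1) = -1 → f (1, 0, 0) = Complex.I →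
      (∀ x : ZMod 2 × ZMod 2 × ZMod 2,
        x ∉ ({(0, 0, 0), (0, 0, 1), (0, 1, 0), (0, 1, 1), (1, 0, 0)} :
          Finset (ZMod 2 × ZMod 2 × ZMod 2)) → f x = 0) →
      ∀ d : ZMod 2 × ZMod 2 × ZMod 2, d ≠ 0 →
        ∑ x : ZMod 2 × ZMod 2 × ZMod 2,
          f x * (starRingEnd ℂ) (f (x - d)) = 0 := by
  intro f h1 h2 h3 h4 h5 h0 d hd
  have e1 : f (1, 0, 1) = 0 := h0 _ (by decide)
  have e2 : f (1, 1, 0) = 0 := h0 _ (by decide)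
  have e3 : f (1, 1, 1) = 0 := h0 _ (by decide)
  obtain ⟨a, b, c⟩ := d
  have hsum : ∀ g : ZMod 2 × ZMod 2 × ZMod 2 → ℂ,
      ∑ x : ZMod 2 × ZMod 2 × ZMod 2, g x =
      g (0,0,0) + g (0,0,1) + g (0,1,0) + g (0,1,1) +
      g (1,0,0) + g (1,0,1) + g (1,1,0) + g (1,1,1) := by
    intro g
    rw [show (Finset.univ : Finset (ZMod 2 × ZMod 2 × ZMod 2)) =
      {(0,0,0),(0,0,1),(0,1,0),(0,1,1),(1,0,0),(1,0,1),(1,1,0),(1,1,1)} by decide]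
    rw [Finset.sum_insert (by decide), Finset.sum_insert (by decide),
      Finset.sum_insert (by decide), Finset.sum_insert (by decide),
      Finset.sum_insert (by decide), Finset.sum_insert (by decide),
      Finset.sum_insert (by decide), Finset.sum_singleton]
    ring
  rw [hsum]
  have two : ∀ z : ZMod 2, z = 0 ∨ z = 1 := by decide
  rcases two a with rfl | rfl <;> rcases two b with rfl | rfl <;>
    rcases two c with rfl | rfl
  · exact absurd rfl hd
  all_goals {
    simp only [Prod.mk_sub_mk, show ((0:ZMod 2) - 0) = 0 from rfl,
      show ((0:ZMod 2) - 1) = 1 from rfl, show ((1:ZMod 2) - 1) = 0 from rfl,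
      show ((1:ZMod 2) - 0) = 1 from rfl, h1, h2, h3, h4, h5, e1, e2, e3,
      map_one, map_neg, map_zero, Complex.conj_I]
    ring }
end

section
/- The 4-element set {(0,0), (0,1), (1,3), (1,0)} is extreme in ZMod 2 × ZMod 4: the function f with values 1, i, −1, i at (0,0), (0,1), (1,3), (1,0) respectively (and 0 elsewhere) has zero autocorrelation at every nonzero d ∈ ZMod 2 × ZMod 4. -/
open Complex Finset

private lemma sum8 (g : ZMod 2 × ZMod 4 → ℂ) :
    ∑ x : ZMod 2 × ZMod 4, g x =
      g (0, 0) + g (0, 1) + g (0, 2) + g (0, 3) +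
      (g (1, 0) + g (1, 1) + g (1, 2) + g (1, 3)) := by
  rw [Fintype.sum_prod_type]
  show ∑ a : Fin 2, ∑ b : Fin 4, g (a, b) = _
  rw [Fin.sum_univ_two, Fin.sum_univ_four, Fin.sum_univ_four]
  rfl

theorem extreme_four_set_zmod2_zmod4 :
    ∀ f : ZMod 2 × ZMod 4 → ℂ,
      f (0, 0) = 1 → f (0, 1) = Complex.I → f (1, 3) = -1 →
      f (1, 0) = Complex.I →
      (∀ x : ZMod 2 × ZMod 4,
        x ∉ ({(0, 0), (0, 1), (1, 3), (1, 0)} : Finset (ZMod 2 × ZMod 4)) →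
          f x = 0) →
      ∀ d : ZMod 2 × ZMod 4, d ≠ 0 →
        ∑ x : ZMod 2 × ZMod 4, f x * (starRingEnd ℂ) (f (x - d)) = 0 := by
  intro f h1 h2 h3 h4 h5 d hd
  set F : ZMod 2 × ZMod 4 → ℂ := fun x =>
    if x = (0, 0) then 1 else if x = (0, 1) then Complex.I
    else if x = (1, 3) then -1 else if x = (1, 0) then Complex.I else 0 with hF
  have hfF : f = F := by
    funext x
    by_cases c1 : x = (0, 0); · subst c1; simpa (config := { decide := true }) [F] using h1
    by_cases c2 : x = (0, 1); · subst c2; simp (config := { decide := true }) [F, h2]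
    by_cases c3 : x = (1, 3); · subst c3; simp (config := { decide := true }) [F, h3]
    by_cases c4 : x = (1, 0); · subst c4; simp (config := { decide := true }) [F, h4]
    have c1' : ¬x = 0 := c1
    have : x ∉ ({(0, 0), (0, 1), (1, 3), (1, 0)} : Finset (ZMod 2 × ZMod 4)) := by
      simp [c1, c1', c2, c3, c4]
    simp [F, c1, c1', c2, c3, c4, h5 x this]
  rw [hfF, sum8]
  rcases d with ⟨a, b⟩
  fin_cases a <;> fin_cases b <;> first
    | exact absurd rfl hd
    | (simp only [hF]
       simp (config := { decide := true }) only [Prod.mk_sub_mk, show ((0:ZMod 2) - 1) = 1 from rfl,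
         show ((1:ZMod 2) - 1) = 0 from rfl,
         show ((0:ZMod 4) - 1) = 3 from rfl, show ((1:ZMod 4) - 1) = 0 from rfl,
         show ((2:ZMod 4) - 1) = 1 from rfl, show ((3:ZMod 4) - 1) = 2 from rfl,
         show ((0:ZMod 4) - 2) = 2 from rfl, show ((1:ZMod 4) - 2) = 3 from rfl,
         show ((2:ZMod 4) - 2) = 0 from rfl, show ((3:ZMod 4) - 2) = 1 from rfl,
         show ((0:ZMod 4) - 3) = 1 from rfl, show ((1:ZMod 4) - 3) = 2 from rfl,
         show ((2:ZMod 4) - 3) = 3 from rfl, show ((3:ZMod 4) - 3) = 0 from rfl,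
         show ∀ y : ZMod 4, y - 0 = y from fun y => sub_zero y,
         show ∀ y : ZMod 2, y - 0 = y from fun y => sub_zero y,
         if_true, if_false, ite_true, ite_false]
       ring_nf
       simp [Complex.ext_iff])
end
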